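/- Let n and j be natural numbers with 2j ≤ n and n ≥ 2j+2. Then C(n+2j−2, 2j) · ∑_{k=0}^{n} [(−n)_k (−j)_k (1/2−j)_k]/[(1−j−n/2)_k ((3−n)/2−j)_k · k!] = C(n,2j) − C(n,2j−1), i.e. I_{2j,n}(n) = n(n−1)···(n−2j+2)·(n+1−4j)/(2j)!. -/

import Mathlib

/-- Rising factorial (Pochhammer symbol) on ℚ. -/
def poch (x : ℚ) : ℕ → ℚ
  | 0 => 1
  | k + 1 => poch x k * (x + k)

lemma poch_succ (x : ℚ) (k : ℕ) : poch x (k+1) = poch x k * (x + k) := rfl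

lemma poch_half_mul (a : ℚ) (k : ℕ) :
    poch (a/2) k * poch ((a+1)/2) k = poch a (2*k) / 4^k := by
  induction k with
  | zero => simp [poch]
  | succ k ih =>
    have h2 : 2*(k+1) = (2*k+1)+1 := by ring
    rw [poch_succ, poch_succ, h2, poch_succ, poch_succ, mul_mul_mul_comm, ih]
    push_cast
    have h4 : (4:ℚ)^k ≠ 0 := by positivity
    field_simp
    ring

lemma poch_neg_nat (N : ℕ) : ∀ m, m ≤ N →
    poch (-(N:ℚ)) m = (-1)^m * N.factorial / (N - m).factorial := by
  intro m
  induction m with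
  | zero =>
    intro _
    simp [poch, div_self (show ((N.factorial:ℚ)) ≠ 0 from by exact_mod_cast N.factorial_ne_zero)]
  | succ m ih =>
    intro hm
    have hm' : m ≤ N := Nat.le_of_succ_le hm
    rw [poch_succ, ih hm']
    have hsub : N - m = (N - (m+1)) + 1 := by omega
    rw [hsub, Nat.factorial_succ]
    have hne : ((N - (m+1)).factorial : ℚ) ≠ 0 := by
      exact_mod_cast (Nat.factorial_ne_zero _)
    have hc2 : ((N - (m+1) : ℕ) : ℚ) + 1 = (N:ℚ) - m := by
      have h9 : (((N - (m+1) : ℕ) + 1 : ℕ) : ℚ) = ((N - m : ℕ) : ℚ) := by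
        congr 1; omega
      push_cast [Nat.cast_sub hm'] at h9 ⊢
      linarith
    have hNm : ((N:ℚ) - m) ≠ 0 := by
      have : (m:ℚ) < N := by exact_mod_cast Nat.lt_of_succ_le hm
      intro h; linarith
    push_cast
    rw [hc2]
    field_simp
    ring

lemma poch_neg_eq_zero (j : ℕ) : ∀ k, j < k → poch (-(j:ℚ)) k = 0 := by
  intro k
  induction k with
  | zero => omega
  | succ k ih =>
    intro h
    rcases Nat.lt_or_ge j k with h'|h'
    · rw [poch_succ, ih h', zero_mul]
    · have : j = k := by omega
      subst this
      rw [poch_succ]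
      simp

lemma term_eq (n j k : ℕ) (hk : k ≤ j) (hj : 1 ≤ j) (h3 : 2*j+2 ≤ n) :
    ((n + 2*j - 2).choose (2*j) : ℚ) *
      (poch (-(n:ℚ)) k * poch (-(j:ℚ)) k * poch (1/2 - (j:ℚ)) k
        / (poch (1 - (j:ℚ) - (n:ℚ)/2) k * poch ((3 - (n:ℚ))/2 - (j:ℚ)) k * (k.factorial : ℚ)))
    = (-1)^k * (n.choose k : ℚ) * ((n-2+2*(j-k)).choose (2*(j-k)) : ℚ) := by
  set M := n + 2*j - 2 with hM
  have hMc : ((M:ℕ):ℚ) = (n:ℚ) + 2*j - 2 := by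
    rw [hM]; push_cast [Nat.cast_sub (show 2 ≤ n + 2*j by omega)]; ring
  have hd1 : poch (-(j:ℚ)) k * poch (1/2 - (j:ℚ)) k
      = poch (-((2*j : ℕ):ℚ)) (2*k) / 4^k := by
    rw [show (-(j:ℚ)) = (-((2*j:ℕ):ℚ))/2 by push_cast; ring,
        show (1/2 - (j:ℚ)) = ((-((2*j:ℕ):ℚ))+1)/2 by push_cast; ring]
    exact poch_half_mul _ k
  have hd2 : poch (1 - (j:ℚ) - (n:ℚ)/2) k * poch ((3 - (n:ℚ))/2 - (j:ℚ)) k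
      = poch (-((M:ℕ):ℚ)) (2*k) / 4^k := by
    rw [show (1 - (j:ℚ) - (n:ℚ)/2) = (-((M:ℕ):ℚ))/2 by rw [hMc]; ring,
        show ((3 - (n:ℚ))/2 - (j:ℚ)) = ((-((M:ℕ):ℚ))+1)/2 by rw [hMc]; ring]
    exact poch_half_mul _ k
  have hv1 : poch (-(n:ℚ)) k = (-1)^k * n.factorial / (n-k).factorial :=
    poch_neg_nat n k (by omega)
  have hv2 : poch (-((2*j : ℕ):ℚ)) (2*k)
      = (2*j).factorial / (2*j - 2*k).factorial := by
    rw [poch_neg_nat (2*j) (2*k) (by omega)]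
    rw [pow_mul]; norm_num
  have hv3 : poch (-((M:ℕ):ℚ)) (2*k) = M.factorial / (M - 2*k).factorial := by
    rw [poch_neg_nat M (2*k) (by omega)]
    rw [pow_mul]; norm_num
  rw [mul_assoc, hd1, hd2, hv1, hv2, hv3]
  rw [show 2*j - 2*k = 2*(j-k) by omega, show M - 2*k = n-2+2*(j-k) by omega]
  rw [Nat.cast_choose ℚ (show 2*j ≤ M by omega),
      Nat.cast_choose ℚ (show k ≤ n by omega),
      Nat.cast_choose ℚ (show 2*(j-k) ≤ n-2+2*(j-k) by omega),
      show M - 2*j = n - 2 by omega,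
      show n-2+2*(j-k) - 2*(j-k) = n - 2 by omega]
  have f1 : ((n.factorial : ℚ)) ≠ 0 := by exact_mod_cast n.factorial_ne_zero
  have f2 : (((n-k).factorial : ℚ)) ≠ 0 := by exact_mod_cast (n-k).factorial_ne_zero
  have f3 : (((2*j).factorial : ℚ)) ≠ 0 := by exact_mod_cast (2*j).factorial_ne_zero
  have f4 : (((2*(j-k)).factorial : ℚ)) ≠ 0 := by exact_mod_cast (2*(j-k)).factorial_ne_zero
  have f5 : ((M.factorial : ℚ)) ≠ 0 := by exact_mod_cast M.factorial_ne_zero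
  have f6 : (((n-2+2*(j-k)).factorial : ℚ)) ≠ 0 := by
    exact_mod_cast (n-2+2*(j-k)).factorial_ne_zero
  have f7 : (((n-2).factorial : ℚ)) ≠ 0 := by exact_mod_cast (n-2).factorial_ne_zero
  have f8 : ((k.factorial : ℚ)) ≠ 0 := by exact_mod_cast k.factorial_ne_zero
  have f9 : (4:ℚ)^k ≠ 0 := by positivity
  field_simp

open PowerSeries in
lemma coeff_one_add_X_pow_ps (n m : ℕ) :
    (PowerSeries.coeff m) ((1 + X)^n) = (n.choose m : ℚ) := by
  have h : ((1 + X : ℚ⟦X⟧))^n = (((1 + Polynomial.X)^n : Polynomial ℚ) : ℚ⟦X⟧) := by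
    rw [Polynomial.coe_pow, Polynomial.coe_add, Polynomial.coe_one, Polynomial.coe_X]
  rw [h, Polynomial.coeff_coe, Polynomial.coeff_one_add_X_pow]

open PowerSeries in
lemma back (n j : ℕ) (hj : 1 ≤ j) (h3 : 2*j+2 ≤ n) :
    ∑ k ∈ Finset.range (j+1),
        ((-1)^k * (n.choose k : ℚ) * ((n-2+2*(j-k)).choose (2*(j-k)) : ℚ))
      = (n.choose (2*j) : ℚ) - (n.choose (2*j-1) : ℚ) := by
  obtain ⟨d, rfl⟩ : ∃ d, n = d + 2 := ⟨n - 2, by omega⟩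
  set n := d + 2 with hn
  set G : ℚ⟦X⟧ := mk fun t => ((d+t).choose d : ℚ) with hGdef
  have hG : G * (1 - X)^(d+1) = 1 := mk_add_choose_mul_one_sub_pow_eq_one ℚ d
  have h12 : (1 - X^2 : ℚ⟦X⟧)^n = (1+X)^n * (1-X)^n := by
    rw [show (1 - X^2 : ℚ⟦X⟧) = (1+X)*(1-X) by ring, mul_pow]
  have key : (1 - X^2 : ℚ⟦X⟧)^n * G = (1 + X)^n * (1 - X) := by
    rw [h12, hn]
    linear_combination ((1 + X : ℚ⟦X⟧)^(d+2) * (1 - X)) * hG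
  have hexp : (1 - X^2 : ℚ⟦X⟧)^n
      = ∑ k ∈ Finset.range (n+1), (-1)^k * (n.choose k : ℚ⟦X⟧) * X^(2*k) := by
    have h := add_pow (-X^2 : ℚ⟦X⟧) 1 n
    simp only [one_pow, mul_one] at h
    calc (1 - X^2 : ℚ⟦X⟧)^n = (-X^2 + 1)^n := by ring
    _ = ∑ k ∈ Finset.range (n+1), (-X^2)^k * (n.choose k : ℚ⟦X⟧) := h
    _ = _ := by
        refine Finset.sum_congr rfl fun k _ => ?_
        rw [show ((-X^2 : ℚ⟦X⟧))^k = (-1)^k * X^(2*k) by rw [neg_pow, ← pow_mul, mul_comm 2 k]]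
        ring
  have hL : (PowerSeries.coeff (2*j)) ((1 - X^2 : ℚ⟦X⟧)^n * G)
      = ∑ k ∈ Finset.range (j+1),
          ((-1)^k * (n.choose k : ℚ) * ((n-2+2*(j-k)).choose (2*(j-k)) : ℚ)) := by
    rw [hexp, Finset.sum_mul, map_sum]
    have hterm : ∀ k,
        (PowerSeries.coeff (2*j)) ((-1)^k * (n.choose k : ℚ⟦X⟧) * X^(2*k) * G)
          = if 2*k ≤ 2*j then (-1)^k * (n.choose k : ℚ) * ((d + (2*j - 2*k)).choose d : ℚ)
            else 0 := by
      intro k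
      have hC : ((-1 : ℚ⟦X⟧))^k * (n.choose k : ℚ⟦X⟧) = C ((-1)^k * (n.choose k : ℚ)) := by
        rw [map_mul, map_pow, map_neg, map_one, map_natCast]
      rw [mul_assoc, hC, coeff_C_mul, coeff_X_pow_mul']
      by_cases h : 2*k ≤ 2*j
      · rw [if_pos h, if_pos h]
        rw [hGdef, coeff_mk]
      · rw [if_neg h, if_neg h, mul_zero]
    rw [Finset.sum_congr rfl (fun k _ => hterm k)]
    rw [← Finset.sum_subset (Finset.range_subset_range.2 (by omega : j + 1 ≤ n + 1))]
    · refine Finset.sum_congr rfl fun k hk => ?_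
      have hk' : k ≤ j := by simpa [Nat.lt_succ_iff] using hk
      rw [if_pos (by omega)]
      congr 2
      have h1 : d + (2*j - 2*k) = (n - 2 + 2*(j-k)) := by omega
      rw [h1]
      have h2 : 2*(j-k) ≤ n - 2 + 2*(j-k) := by omega
      rw [← Nat.choose_symm h2]
      congr 1
      omega
    · intro k _ hk
      rw [if_neg (by simp at hk; omega)]
  have hR : (PowerSeries.coeff (2*j)) ((1 + X : ℚ⟦X⟧)^n * (1 - X))
      = (n.choose (2*j) : ℚ) - (n.choose (2*j-1) : ℚ) := by
    have : ((1 + X : ℚ⟦X⟧)^n * (1 - X)) = (1+X)^n - (1+X)^n * X := by ring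
    rw [this, map_sub, coeff_one_add_X_pow_ps]
    rw [show 2*j = (2*j-1)+1 by omega, coeff_succ_mul_X, coeff_one_add_X_pow_ps]
    rw [show (2*j-1)+1 = 2*j by omega]
  rw [← hL, key, hR]

/-- I_{2j,n}(n) = C(n,2j) − C(n,2j−1): even case of Theorem 2(1). -/
theorem dimension_even_full_resonance (n j : ℕ) (hj : 1 ≤ j) (h2 : 2 * j ≤ n)
    (h3 : n ≥ 2 * j + 2) :
    (Nat.choose (n + 2 * j - 2) (2 * j) : ℚ)
        * ∑ k ∈ Finset.range (n + 1),
            poch (-(n : ℚ)) k * poch (-(j : ℚ)) k * poch (1 / 2 - (j : ℚ)) k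
              / (poch (1 - (j : ℚ) - (n : ℚ) / 2) k * poch ((3 - (n : ℚ)) / 2 - (j : ℚ)) k
                  * (Nat.factorial k : ℚ))
      = (Nat.choose n (2 * j) : ℚ) - (Nat.choose n (2 * j - 1) : ℚ) := by
  have hsum : ∑ k ∈ Finset.range (n + 1),
      poch (-(n : ℚ)) k * poch (-(j : ℚ)) k * poch (1 / 2 - (j : ℚ)) k
        / (poch (1 - (j : ℚ) - (n : ℚ) / 2) k * poch ((3 - (n : ℚ)) / 2 - (j : ℚ)) k
            * (Nat.factorial k : ℚ))
      = ∑ k ∈ Finset.range (j + 1),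
      poch (-(n : ℚ)) k * poch (-(j : ℚ)) k * poch (1 / 2 - (j : ℚ)) k
        / (poch (1 - (j : ℚ) - (n : ℚ) / 2) k * poch ((3 - (n : ℚ)) / 2 - (j : ℚ)) k
            * (Nat.factorial k : ℚ)) := by
    refine (Finset.sum_subset (Finset.range_subset_range.2 (by omega : j + 1 ≤ n + 1)) ?_).symm
    intro k _ hk
    have hjk : j < k := by simp only [Finset.mem_range] at hk; omega
    rw [poch_neg_eq_zero j k hjk]
    simp
  rw [hsum, Finset.mul_sum]
  rw [Finset.sum_congr rfl (fun k hk => term_eq n j k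
      (by simp only [Finset.mem_range] at hk; omega) hj (by omega))]
  exact back n j hj (by omega)
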